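/- Let E be a real normed vector space that is complete, let a < b be real numbers with k = b − a, and let g : ℝ → E be twice continuously differentiable on [a, b]. Then ‖g'(b) − (g(b) − g(a))/k‖² ≤ (k/3) ∫_a^b ‖g''(s)‖² ds. -/

import Mathlib

open Set MeasureTheory intervalIntegral

/-- The Taylor-remainder estimate (ex2) for the backward Euler consistency error:
`‖g'(b) − (g(b) − g(a))/k‖² ≤ (k/3) ∫_a^b ‖g'' s‖² ds` with `k = b − a`. -/
theorem taylor_remainder_estimate
    {E : Type*} [NormedAddCommGroup E] [NormedSpace ℝ E] [CompleteSpace E]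
    (a b : ℝ) (hab : a < b) (k : ℝ) (hk : k = b - a)
    (g g' g'' : ℝ → E)
    (hg : ∀ t ∈ Icc a b, HasDerivWithinAt g (g' t) (Icc a b) t)
    (hg' : ∀ t ∈ Icc a b, HasDerivWithinAt g' (g'' t) (Icc a b) t)
    (hg'' : ContinuousOn g'' (Icc a b)) :
    ‖g' b - (1 / k) • (g b - g a)‖ ^ 2 ≤ (k / 3) * ∫ s in a..b, ‖g'' s‖ ^ 2 := by
  have hk0 : 0 < k := by rw [hk]; linarith
  have hle : a ≤ b := hab.le
  have hcg : ContinuousOn g (Icc a b) := fun t ht => (hg t ht).continuousWithinAt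
  have hcg' : ContinuousOn g' (Icc a b) := fun t ht => (hg' t ht).continuousWithinAt
  -- integrability of the integrand
  have hcont : ContinuousOn (fun s => (s - a) • g'' s) (Icc a b) :=
    ((continuous_id.sub continuous_const).continuousOn).smul hg''
  have hint : IntervalIntegrable (fun s => (s - a) • g'' s) volume a b :=
    hcont.intervalIntegrable_of_Icc hle
  -- Step 1: the identity via integration by parts
  have hid : ∫ s in a..b, (s - a) • g'' s = k • g' b - (g b - g a) := by
    have := integral_eq_sub_of_hasDeriv_right_of_le hle
      (f := fun s => (s - a) • g' s - g s) (f' := fun s => (s - a) • g'' s)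
      (((continuous_id.sub continuous_const).continuousOn).smul hcg' |>.sub hcg)
      (fun x hx => by
        have hxI : Icc a b ∈ nhds x := Icc_mem_nhds hx.1 hx.2
        have h1 : HasDerivAt g' (g'' x) x :=
          (hg' x (Ioo_subset_Icc_self hx)).hasDerivAt hxI
        have h0 : HasDerivAt g (g' x) x :=
          (hg x (Ioo_subset_Icc_self hx)).hasDerivAt hxI
        have h2 : HasDerivAt (fun s => s - a) 1 x := (hasDerivAt_id x).sub_const a
        have h3 : HasDerivAt (fun s => (s - a) • g' s)
            ((x - a) • g'' x + (1:ℝ) • g' x) x := h2.smul h1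
        have h4 : HasDerivAt (fun s => (s - a) • g' s - g s) ((x - a) • g'' x) x := by
          exact (h3.sub h0).congr_deriv (by rw [one_smul, add_sub_cancel_right])
        exact h4.hasDerivWithinAt)
      hint
    rw [this]
    rw [hk]
    simp
    abel
  -- rewrite the target vector as (1/k) • integral
  have hvec : g' b - (1 / k) • (g b - g a) = (1 / k) • ∫ s in a..b, (s - a) • g'' s := by
    have h1 : (1 / k) • (k • g' b) = g' b := by
      rw [smul_smul, one_div_mul_cancel hk0.ne', one_smul]
    rw [hid, smul_sub (1/k) (k • g' b), h1]
  rw [hvec]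
  set I : E := ∫ s in a..b, (s - a) • g'' s with hI
  -- Cauchy-Schwarz setup
  set μ : Measure ℝ := volume.restrict (Ioc a b) with hμ
  haveI : IsFiniteMeasure μ := ⟨by
    rw [hμ, Measure.restrict_apply_univ, Real.volume_Ioc]
    exact ENNReal.ofReal_lt_top⟩
  have hmf : AEStronglyMeasurable (fun s => s - a) μ :=
    (continuous_id.sub continuous_const).aestronglyMeasurable
  have hmg : AEStronglyMeasurable (fun s => ‖g'' s‖) μ :=
    ((hg''.mono Ioc_subset_Icc_self).aestronglyMeasurable measurableSet_Ioc).norm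
  obtain ⟨C, hC⟩ := isCompact_Icc.exists_bound_of_continuousOn hg''
  have h2 : ENNReal.ofReal (2:ℝ) = 2 := by norm_num [ENNReal.ofReal_ofNat]
  have hmemf : MemLp (fun s => s - a) (ENNReal.ofReal 2) μ := by
    refine MemLp.of_bound hmf (b - a) ?_
    filter_upwards [ae_restrict_mem measurableSet_Ioc] with x hx
    rw [Real.norm_eq_abs, abs_of_nonneg (by linarith [hx.1])]
    linarith [hx.2]
  have hmemg : MemLp (fun s => ‖g'' s‖) (ENNReal.ofReal 2) μ := by
    refine MemLp.of_bound hmg C ?_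
    filter_upwards [ae_restrict_mem measurableSet_Ioc] with x hx
    rw [Real.norm_eq_abs, abs_of_nonneg (norm_nonneg _)]
    exact hC x (Ioc_subset_Icc_self hx)
  have hconj : (2:ℝ).HolderConjugate 2 := by
    exact Real.HolderConjugate.two_two
  have hCS := integral_mul_le_Lp_mul_Lq_of_nonneg hconj
    (f := fun s => s - a) (g := fun s => ‖g'' s‖)
    (by filter_upwards [ae_restrict_mem measurableSet_Ioc] with x hx; show (0:ℝ) ≤ x - a; linarith [hx.1])
    (ae_of_all _ fun x => norm_nonneg _) hmemf hmemg
  -- compute ∫ (s-a)^2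
  have hA : ∫ x, (x - a) ^ (2:ℝ) ∂μ = k ^ 3 / 3 := by
    have : ∫ x, (x - a) ^ (2:ℝ) ∂μ = ∫ s in a..b, (s - a) ^ (2:ℕ) := by
      rw [intervalIntegral.integral_of_le hle]
      exact integral_congr_ae (ae_of_all _ fun x => by
        simp [Real.rpow_two])
    rw [this]
    have := intervalIntegral.integral_comp_sub_right (a := a) (b := b)
      (fun x => x ^ (2:ℕ)) a
    rw [this]
    simp [integral_pow, ← hk]
    ring
  -- identify ∫ ‖g''‖^2
  have hB : ∫ x, ‖g'' x‖ ^ (2:ℝ) ∂μ = ∫ s in a..b, ‖g'' s‖ ^ 2 := by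
    rw [intervalIntegral.integral_of_le hle]
    exact integral_congr_ae (ae_of_all _ fun x => by
      simp [Real.rpow_two])
  set B : ℝ := ∫ s in a..b, ‖g'' s‖ ^ 2 with hBdef
  have hBnn : 0 ≤ B := by
    rw [hBdef, intervalIntegral.integral_of_le hle]
    exact integral_nonneg fun x => by positivity
  rw [hA, hB] at hCS
  -- bound ‖I‖
  have hnorm : ‖I‖ ≤ (k ^ 3 / 3) ^ ((1:ℝ)/2) * B ^ ((1:ℝ)/2) := by
    refine le_trans (intervalIntegral.norm_integral_le_integral_norm hle) ?_
    have : ∫ s in a..b, ‖(s - a) • g'' s‖ = ∫ x, (x - a) * ‖g'' x‖ ∂μ := by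
      rw [intervalIntegral.integral_of_le hle]
      refine integral_congr_ae ?_
      filter_upwards [ae_restrict_mem measurableSet_Ioc] with x hx
      rw [norm_smul, Real.norm_eq_abs, abs_of_nonneg (by linarith [hx.1])]
    rw [this]
    exact hCS
  -- conclude
  have hnormnn : (0:ℝ) ≤ ‖I‖ := norm_nonneg _
  have hsq : ‖I‖ ^ 2 ≤ (k ^ 3 / 3) * B := by
    calc ‖I‖ ^ 2 ≤ ((k ^ 3 / 3) ^ ((1:ℝ)/2) * B ^ ((1:ℝ)/2)) ^ 2 := by
          exact pow_le_pow_left₀ hnormnn hnorm 2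
      _ = (k ^ 3 / 3) * B := by
          rw [mul_pow, ← Real.rpow_natCast ((k^3/3) ^ ((1:ℝ)/2)) 2,
            ← Real.rpow_natCast (B ^ ((1:ℝ)/2)) 2,
            ← Real.rpow_mul (by positivity), ← Real.rpow_mul hBnn]
          norm_num
  rw [norm_smul, mul_pow, Real.norm_eq_abs, abs_of_pos (by positivity), div_pow, one_pow]
  calc (1 / k ^ 2) * ‖I‖ ^ 2 ≤ (1 / k ^ 2) * ((k ^ 3 / 3) * B) := by
        apply mul_le_mul_of_nonneg_left hsq (by positivity)
    _ = (k / 3) * B := by field_simp
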